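/- Let U ⊆ ℝⁿ be a closed convex set and let u be a Pareto optimal point of U lying in the relative interior of a face F of U. Then every point of F is Pareto optimal. -/

import Mathlib

open Classical

noncomputable def dotp {n : ℕ} (φ u : Fin n → ℝ) : ℝ := ∑ i, φ i * u i

def Pareto {n : ℕ} (U : Set (Fin n → ℝ)) (u : Fin n → ℝ) : Prop :=
  u ∈ U ∧ ∀ v ∈ U, (∀ i, u i ≤ v i) → v = u

def dc {n : ℕ} (U : Set (Fin n → ℝ)) : Set (Fin n → ℝ) :=
  {x | ∃ u ∈ U, ∀ i, x i ≤ u i}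

def IsFace {n : ℕ} (U F : Set (Fin n → ℝ)) : Prop :=
  F.Nonempty ∧ F ⊆ U ∧ Convex ℝ F ∧
    ∀ v ∈ U, ∀ w ∈ U, ∀ α : ℝ, 0 < α → α < 1 →
      α • v + (1 - α) • w ∈ F → v ∈ F ∧ w ∈ F

noncomputable def seqSet {n : ℕ} (U : Set (Fin n → ℝ)) (φ : ℕ → (Fin n → ℝ)) :
    ℕ → Set (Fin n → ℝ)
  | 0 => U
  | t + 1 => {x ∈ seqSet U φ t | ∀ y ∈ seqSet U φ t, dotp (φ t) y ≤ dotp (φ t) x}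

def DownClosedIn {n : ℕ} (U : Set (Fin n → ℝ)) (J : Set (Fin n)) : Prop :=
  ∀ u ∈ U, ∀ τ : ℝ, 0 ≤ τ → ∀ K ⊆ J,
    (fun i => if i ∈ K then u i - τ else u i) ∈ U

def IsPolyhedron {n : ℕ} (P : Set (Fin n → ℝ)) : Prop :=
  ∃ (m : ℕ) (a : Fin m → (Fin n → ℝ)) (b : Fin m → ℝ),
    P = {x | ∀ i, (∑ j, a i j * x j) ≤ b i}

def NormalCone {n : ℕ} (U : Set (Fin n → ℝ)) (u : Fin n → ℝ) : Set (Fin n → ℝ) :=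
  {φ | ∀ v ∈ U, dotp φ v ≤ dotp φ u}

def riE {n : ℕ} (G : Set (Fin n → ℝ)) : Set (Fin n → ℝ) :=
  {u ∈ G | ∀ u' ∈ G, ∃ lam : ℝ, 0 < lam ∧ u + lam • (u - u') ∈ G}

theorem stmt2 {n : ℕ} (U F : Set (Fin n → ℝ)) (hcl : IsClosed U) (hcv : Convex ℝ U)
    (hF : IsFace U F) (u : Fin n → ℝ) (hu : u ∈ riE F) (hP : Pareto U u) :
    ∀ v ∈ F, Pareto U v := by
  intro v hv
  refine ⟨hF.2.1 hv, ?_⟩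
  intro w hw hle
  obtain ⟨lam, hlam, hp⟩ := hu.2 v hv
  set α : ℝ := 1 / (1 + lam) with hα
  have h1lam : (0:ℝ) < 1 + lam := by linarith
  have hα0 : 0 < α := by positivity
  have hα1 : α < 1 := by
    rw [hα, div_lt_one h1lam]; linarith
  have hz : α • (u + lam • (u - v)) + (1 - α) • w ∈ U :=
    hcv (hF.2.1 hp) hw (le_of_lt hα0) (by linarith) (by ring)
  have hzi : ∀ i, (α • (u + lam • (u - v)) + (1 - α) • w) i
      = u i + (1 - α) * (w i - v i) := by
    intro i
    have hαlam : α * lam = 1 - α := by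
      rw [hα, div_mul_eq_mul_div, one_mul, eq_sub_iff_add_eq, ← add_div,
        div_eq_one_iff_eq (ne_of_gt h1lam)]
      ring
    simp only [Pi.add_apply, Pi.smul_apply, smul_eq_mul, Pi.sub_apply]
    linear_combination (u i - v i) * hαlam
  have hge : ∀ i, u i ≤ (α • (u + lam • (u - v)) + (1 - α) • w) i := by
    intro i
    rw [hzi i]
    nlinarith [hle i]
  have heq := hP.2 _ hz hge
  funext i
  have := congrFun heq i
  rw [hzi i] at this
  have h1α : 0 < 1 - α := by linarith
  nlinarith [this]
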